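/- Let A₁, A₂ be 2×2 complex matrices with entries A_t = (α^{(t)}_{i,j}), and let (a_n)_{n≥0}, (b_n)_{n≥0} be complex sequences satisfying, for all n ≥ 2, a_n = α^{(1)}_{1,1} a_{n−1} + α^{(1)}_{1,2} b_{n−1} + α^{(2)}_{1,1} a_{n−2} + α^{(2)}_{1,2} b_{n−2} and b_n = α^{(1)}_{2,1} a_{n−1} + α^{(1)}_{2,2} b_{n−1} + α^{(2)}_{2,1} a_{n−2} + α^{(2)}_{2,2} b_{n−2}. Then both sequences satisfy the order-4 recurrence z_n = tr(A₁)·z_{n−1} + (tr(A₂) − det(A₁))·z_{n−2} − Det⟨A^{(1,2)}⟩·z_{n−3} − det(A₂)·z_{n−4} for all n ≥ 4. -/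
import Mathlib


open Matrix

/-- The 2×2 matrix whose first column is the first column of `A` and whose
second column is the second column of `B`. -/
noncomputable def mixMat (A B : Matrix (Fin 2) (Fin 2) ℂ) : Matrix (Fin 2) (Fin 2) ℂ :=
  Matrix.of fun i j => if j = 0 then A i j else B i j

/-- `Det⟨A^{(i,j)}⟩ = det(A_{i,j}) + det(A_{j,i})`. -/
noncomputable def detPair (A B : Matrix (Fin 2) (Fin 2) ℂ) : ℂ :=
  (mixMat A B).det + (mixMat B A).det

lemma key (p q r s p' q' r' s' : ℂ) (a b : ℕ → ℂ)
    (ha : ∀ n, 2 ≤ n → a n = p * a (n - 1) + q * b (n - 1) + p' * a (n - 2) + q' * b (n - 2))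
    (hb : ∀ n, 2 ≤ n → b n = r * a (n - 1) + s * b (n - 1) + r' * a (n - 2) + s' * b (n - 2)) :
    ∀ n, 4 ≤ n → a n = (p + s) * a (n - 1) + (p' + s' - (p * s - q * r)) * a (n - 2)
      - (p * s' - q * r' + p' * s - q' * r) * a (n - 3) - (p' * s' - q' * r') * a (n - 4) := by
  intro n hn
  obtain ⟨m, rfl⟩ := Nat.exists_eq_add_of_le hn
  have e0 := ha (4 + m) (by omega)
  have e1 := ha (3 + m) (by omega)
  have e2 := ha (2 + m) (by omega)
  have f1 := hb (3 + m) (by omega)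
  have f2 := hb (2 + m) (by omega)
  simp only [show 4 + m - 1 = 3 + m from by omega, show 4 + m - 2 = 2 + m from by omega,
    show 4 + m - 3 = 1 + m from by omega, show 4 + m - 4 = m from by omega,
    show 3 + m - 1 = 2 + m from by omega, show 3 + m - 2 = 1 + m from by omega,
    show 2 + m - 1 = 1 + m from by omega, show 2 + m - 2 = m from by omega] at *
  rw [e0, e1, f1, e2, f2]
  ring

theorem stmt_5 (A₁ A₂ : Matrix (Fin 2) (Fin 2) ℂ) (a b : ℕ → ℂ)
    (ha : ∀ n, 2 ≤ n → a n = A₁ 0 0 * a (n - 1) + A₁ 0 1 * b (n - 1)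
        + A₂ 0 0 * a (n - 2) + A₂ 0 1 * b (n - 2))
    (hb : ∀ n, 2 ≤ n → b n = A₁ 1 0 * a (n - 1) + A₁ 1 1 * b (n - 1)
        + A₂ 1 0 * a (n - 2) + A₂ 1 1 * b (n - 2)) :
    (∀ n, 4 ≤ n → a n = A₁.trace * a (n - 1) + (A₂.trace - A₁.det) * a (n - 2)
        - detPair A₁ A₂ * a (n - 3) - A₂.det * a (n - 4)) ∧
    (∀ n, 4 ≤ n → b n = A₁.trace * b (n - 1) + (A₂.trace - A₁.det) * b (n - 2)
        - detPair A₁ A₂ * b (n - 3) - A₂.det * b (n - 4)) := by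
  have hd : detPair A₁ A₂ = A₁ 0 0 * A₂ 1 1 - A₁ 0 1 * A₂ 1 0 + A₂ 0 0 * A₁ 1 1 - A₂ 0 1 * A₁ 1 0 := by
    simp [detPair, mixMat, Matrix.det_fin_two]
    ring
  constructor
  · intro n hn
    have := key (A₁ 0 0) (A₁ 0 1) (A₁ 1 0) (A₁ 1 1) (A₂ 0 0) (A₂ 0 1) (A₂ 1 0) (A₂ 1 1)
      a b ha hb n hn
    rw [this, Matrix.trace_fin_two, Matrix.trace_fin_two, Matrix.det_fin_two,
      Matrix.det_fin_two, hd]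
  · intro n hn
    have hb' : ∀ n, 2 ≤ n → b n = A₁ 1 1 * b (n - 1) + A₁ 1 0 * a (n - 1)
        + A₂ 1 1 * b (n - 2) + A₂ 1 0 * a (n - 2) := fun n h => by rw [hb n h]; ring
    have ha' : ∀ n, 2 ≤ n → a n = A₁ 0 1 * b (n - 1) + A₁ 0 0 * a (n - 1)
        + A₂ 0 1 * b (n - 2) + A₂ 0 0 * a (n - 2) := fun n h => by rw [ha n h]; ring
    have := key (A₁ 1 1) (A₁ 1 0) (A₁ 0 1) (A₁ 0 0) (A₂ 1 1) (A₂ 1 0) (A₂ 0 1) (A₂ 0 0)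
      b a hb' ha' n hn
    rw [this, Matrix.trace_fin_two, Matrix.trace_fin_two, Matrix.det_fin_two,
      Matrix.det_fin_two, hd]
    ring
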